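/- There is a constant C > 0 (depending only on the link) such that for all v ∈ B⁴, z ∈ (0,1), and almost all (s,t), |Jac g_{(v,z)}|(s,t) ≤ C, where g_{(v,z)} is the canonical family Gauss map. -/

import Mathlib

open Real MeasureTheory
open scoped RealInnerProductSpace

variable {E : Type*} [NormedAddCommGroup E] [InnerProductSpace ℝ E]

lemma aux_inv_dist (x y : E) (hx : x ≠ 0) (hy : y ≠ 0) :
    ‖(‖x‖ ^ 2)⁻¹ • x - (‖y‖ ^ 2)⁻¹ • y‖ = ‖x - y‖ / (‖x‖ * ‖y‖) := by
  have hx' : ‖x‖ ≠ 0 := norm_ne_zero_iff.mpr hx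
  have hy' : ‖y‖ ≠ 0 := norm_ne_zero_iff.mpr hy
  have hsq : ‖(‖x‖ ^ 2)⁻¹ • x - (‖y‖ ^ 2)⁻¹ • y‖ ^ 2 = (‖x - y‖ / (‖x‖ * ‖y‖)) ^ 2 := by
    rw [div_pow, norm_sub_sq_real, norm_sub_sq_real, real_inner_smul_left, real_inner_smul_right]
    simp only [norm_smul, Real.norm_eq_abs, abs_inv, abs_pow, abs_norm]
    field_simp
    ring
  have h1 := congrArg Real.sqrt hsq
  rwa [Real.sqrt_sq (norm_nonneg _), Real.sqrt_sq (by positivity)] at h1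

lemma aux_radius (v x : E) (hv : ‖v‖ < 1) (hx : ‖x‖ = 1) :
    ‖(‖x - v‖ ^ 2)⁻¹ • (x - v) - (1 - ‖v‖ ^ 2)⁻¹ • v‖ = (1 - ‖v‖ ^ 2)⁻¹ := by
  have hb : 0 < 1 - ‖v‖ ^ 2 := by nlinarith [norm_nonneg v]
  have hxv : 0 < ‖x - v‖ := by
    have h := norm_sub_norm_le x v
    rw [hx] at h; linarith
  have hrel : ‖x - v‖ ^ 2 = 1 - 2 * ⟪x, v⟫ + ‖v‖ ^ 2 := by
    rw [norm_sub_sq_real, hx]; ring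
  have hsq : ‖(‖x - v‖ ^ 2)⁻¹ • (x - v) - (1 - ‖v‖ ^ 2)⁻¹ • v‖ ^ 2 = ((1 - ‖v‖ ^ 2)⁻¹) ^ 2 := by
    rw [norm_sub_sq_real, real_inner_smul_left, real_inner_smul_right, inner_sub_left,
      real_inner_self_eq_norm_sq]
    simp only [norm_smul, Real.norm_eq_abs, abs_inv, abs_pow, abs_norm, abs_of_pos hb]
    have hi : ⟪x, v⟫ = (1 + ‖v‖ ^ 2 - ‖x - v‖ ^ 2) / 2 := by linarith
    rw [hi]
    field_simp
    ring
  have h1 := congrArg Real.sqrt hsq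
  rwa [Real.sqrt_sq (norm_nonneg _), Real.sqrt_sq (by positivity)] at h1

lemma aux_normalize (x y : E) (hx : x ≠ 0) :
    ‖‖x‖⁻¹ • x - ‖y‖⁻¹ • y‖ ≤ 2 * ‖x - y‖ / ‖x‖ := by
  have hx' : 0 < ‖x‖ := norm_pos_iff.mpr hx
  by_cases hy : y = 0
  · subst hy
    simp only [norm_zero, inv_zero, zero_smul, sub_zero]
    rw [norm_smul, Real.norm_eq_abs, abs_inv, abs_norm, inv_mul_cancel₀ hx'.ne']
    rw [mul_div_assoc, div_self hx'.ne']
    norm_num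
  · have hy' : 0 < ‖y‖ := norm_pos_iff.mpr hy
    have key : ‖x‖⁻¹ • x - ‖y‖⁻¹ • y = ‖x‖⁻¹ • (x - y) + (‖x‖⁻¹ - ‖y‖⁻¹) • y := by
      rw [smul_sub, sub_smul]; abel
    rw [key]
    have h1 : ‖‖x‖⁻¹ • (x - y)‖ = ‖x - y‖ / ‖x‖ := by
      rw [norm_smul, Real.norm_eq_abs, abs_inv, abs_norm]; ring
    have h2 : ‖(‖x‖⁻¹ - ‖y‖⁻¹) • y‖ ≤ ‖x - y‖ / ‖x‖ := by
      rw [norm_smul, Real.norm_eq_abs]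
      have : |‖x‖⁻¹ - ‖y‖⁻¹| = |‖y‖ - ‖x‖| / (‖x‖ * ‖y‖) := by
        rw [eq_div_iff (by positivity), ← abs_of_pos (mul_pos hx' hy'), ← abs_mul]
        congr 1
        field_simp
      rw [this]
      have h3 : |‖y‖ - ‖x‖| ≤ ‖x - y‖ := by
        rw [abs_sub_comm]
        exact abs_norm_sub_norm_le x y
      calc |‖y‖ - ‖x‖| / (‖x‖ * ‖y‖) * ‖y‖ = |‖y‖ - ‖x‖| / ‖x‖ := by field_simp
        _ ≤ ‖x - y‖ / ‖x‖ := by gcongr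
    calc ‖‖x‖⁻¹ • (x - y) + (‖x‖⁻¹ - ‖y‖⁻¹) • y‖
        ≤ ‖‖x‖⁻¹ • (x - y)‖ + ‖(‖x‖⁻¹ - ‖y‖⁻¹) • y‖ := norm_add_le _ _
      _ ≤ ‖x - y‖ / ‖x‖ + ‖x - y‖ / ‖x‖ := by rw [h1]; gcongr
      _ = 2 * ‖x - y‖ / ‖x‖ := by ring

lemma aux_deriv_bound (f : ℝ → E) (s M : ℝ) (hM : 0 ≤ M)
    (h : ∀ s', ‖f s' - f s‖ ≤ M * |s' - s|) : ‖deriv f s‖ ≤ M := by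
  by_cases hd : DifferentiableAt ℝ f s
  · have hT := hasDerivAt_iff_tendsto_slope.mp hd.hasDerivAt
    have h1 : Filter.Tendsto (fun s' => ‖slope f s s'‖) (nhdsWithin s {s}ᶜ)
        (nhds ‖deriv f s‖) := (continuous_norm.tendsto _).comp hT
    refine le_of_tendsto h1 ?_
    filter_upwards [self_mem_nhdsWithin] with s' hs'
    have hss : s' - s ≠ 0 := sub_ne_zero.mpr hs'
    rw [slope_def_module, norm_smul, Real.norm_eq_abs, abs_inv]
    calc |s' - s|⁻¹ * ‖f s' - f s‖ ≤ |s' - s|⁻¹ * (M * |s' - s|) := by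
          gcongr
          exact h s'
      _ = M := by
          field_simp
  · simp [deriv_zero_of_not_differentiableAt hd, hM]

lemma aux_key (v x y : E) (hv : ‖v‖ < 1) (hx : ‖x‖ = 1) (hy : ‖y‖ = 1)
    (α a : ℝ) (hα : 0 < α) (ha : 0 < a) (hsep : α ≤ ‖x - y‖) :
    α * Real.sqrt a / (‖x - v‖ * ‖y - v‖) ≤
      ‖(‖x - v‖ ^ 2)⁻¹ • (x - v) -
        (a • ((‖y - v‖ ^ 2)⁻¹ • (y - v) - (1 - ‖v‖ ^ 2)⁻¹ • v) + (1 - ‖v‖ ^ 2)⁻¹ • v)‖ := by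
  have hb : 0 < 1 - ‖v‖ ^ 2 := by nlinarith [norm_nonneg v]
  have hxv : 0 < ‖x - v‖ := by
    have h := norm_sub_norm_le x v; rw [hx] at h; linarith
  have hyv : 0 < ‖y - v‖ := by
    have h := norm_sub_norm_le y v; rw [hy] at h; linarith
  have hxne : x - v ≠ 0 := by intro h; rw [h] at hxv; simp at hxv
  have hyne : y - v ≠ 0 := by intro h; rw [h] at hyv; simp at hyv
  set c : E := (1 - ‖v‖ ^ 2)⁻¹ • v with hc
  set X : E := (‖x - v‖ ^ 2)⁻¹ • (x - v) - c with hX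
  set Y : E := (‖y - v‖ ^ 2)⁻¹ • (y - v) - c with hY
  have hrw : (‖x - v‖ ^ 2)⁻¹ • (x - v) - (a • ((‖y - v‖ ^ 2)⁻¹ • (y - v) - c) + c)
      = X - a • Y := by rw [hX, hY]; abel
  rw [hrw]
  have hXn : ‖X‖ = (1 - ‖v‖ ^ 2)⁻¹ := aux_radius v x hv hx
  have hYn : ‖Y‖ = (1 - ‖v‖ ^ 2)⁻¹ := aux_radius v y hv hy
  have hXY : ‖X - Y‖ = ‖x - y‖ / (‖x - v‖ * ‖y - v‖) := by
    have h1 : X - Y = (‖x - v‖ ^ 2)⁻¹ • (x - v) - (‖y - v‖ ^ 2)⁻¹ • (y - v) := by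
      rw [hX, hY]; abel
    rw [h1, aux_inv_dist _ _ hxne hyne, sub_sub_sub_cancel_right]
  have hquad : a * ‖X - Y‖ ^ 2 ≤ ‖X - a • Y‖ ^ 2 := by
    have e1 : ‖X - a • Y‖ ^ 2 = ‖X‖ ^ 2 - 2 * (a * ⟪X, Y⟫) + a ^ 2 * ‖Y‖ ^ 2 := by
      rw [norm_sub_sq_real, real_inner_smul_right, norm_smul, Real.norm_eq_abs, abs_of_pos ha]
      ring
    have e2 : ‖X - Y‖ ^ 2 = ‖X‖ ^ 2 - 2 * ⟪X, Y⟫ + ‖Y‖ ^ 2 := norm_sub_sq_real X Y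
    rw [e1, e2, hXn, hYn]
    nlinarith [sq_nonneg ((1 - a) * (1 - ‖v‖ ^ 2)⁻¹)]
  have hlow : (α * Real.sqrt a / (‖x - v‖ * ‖y - v‖)) ^ 2 ≤ ‖X - a • Y‖ ^ 2 := by
    have h2 : (α * Real.sqrt a / (‖x - v‖ * ‖y - v‖)) ^ 2
        = a * (α / (‖x - v‖ * ‖y - v‖)) ^ 2 := by
      rw [div_pow, div_pow, mul_pow, Real.sq_sqrt ha.le]; ring
    rw [h2]
    refine le_trans ?_ hquad
    rw [hXY]
    gcongr
  have h3 := Real.sqrt_le_sqrt hlow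
  rwa [Real.sqrt_sq (by positivity), Real.sqrt_sq (norm_nonneg _)] at h3

lemma aux_key' (v x y : E) (hv : ‖v‖ < 1) (hx : ‖x‖ = 1) (hy : ‖y‖ = 1)
    (α sa : ℝ) (hα : 0 < α) (hsa : 0 < sa) (hsep : α ≤ ‖x - y‖) :
    α * sa / (‖x - v‖ * ‖y - v‖) ≤
      ‖(‖x - v‖ ^ 2)⁻¹ • (x - v) -
        (sa ^ 2 • ((‖y - v‖ ^ 2)⁻¹ • (y - v) - (1 - ‖v‖ ^ 2)⁻¹ • v) + (1 - ‖v‖ ^ 2)⁻¹ • v)‖ := by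
  have h := aux_key v x y hv hx hy α (sa ^ 2) hα (by positivity) hsep
  rwa [Real.sqrt_sq hsa.le] at h

lemma aux_diff1 (v x x₀ y : E) (hv : ‖v‖ < 1) (hx : ‖x‖ = 1) (hx₀ : ‖x₀‖ = 1) (hy : ‖y‖ = 1)
    (α sa : ℝ) (hα : 0 < α) (hsa : 0 < sa) (hsx : α ≤ ‖x - y‖) :
    ‖‖(‖x - v‖ ^ 2)⁻¹ • (x - v) -
          (sa ^ 2 • ((‖y - v‖ ^ 2)⁻¹ • (y - v) - (1 - ‖v‖ ^ 2)⁻¹ • v) + (1 - ‖v‖ ^ 2)⁻¹ • v)‖⁻¹ •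
        ((‖x - v‖ ^ 2)⁻¹ • (x - v) -
          (sa ^ 2 • ((‖y - v‖ ^ 2)⁻¹ • (y - v) - (1 - ‖v‖ ^ 2)⁻¹ • v) + (1 - ‖v‖ ^ 2)⁻¹ • v)) -
      ‖(‖x₀ - v‖ ^ 2)⁻¹ • (x₀ - v) -
          (sa ^ 2 • ((‖y - v‖ ^ 2)⁻¹ • (y - v) - (1 - ‖v‖ ^ 2)⁻¹ • v) + (1 - ‖v‖ ^ 2)⁻¹ • v)‖⁻¹ •
        ((‖x₀ - v‖ ^ 2)⁻¹ • (x₀ - v) -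
          (sa ^ 2 • ((‖y - v‖ ^ 2)⁻¹ • (y - v) - (1 - ‖v‖ ^ 2)⁻¹ • v) + (1 - ‖v‖ ^ 2)⁻¹ • v))‖
    ≤ 2 * ‖y - v‖ / (α * sa * ‖x₀ - v‖) * ‖x - x₀‖ := by
  have hb : 0 < 1 - ‖v‖ ^ 2 := by nlinarith [norm_nonneg v]
  have hxv : 0 < ‖x - v‖ := by have h := norm_sub_norm_le x v; rw [hx] at h; linarith
  have hx₀v : 0 < ‖x₀ - v‖ := by have h := norm_sub_norm_le x₀ v; rw [hx₀] at h; linarith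
  have hyv : 0 < ‖y - v‖ := by have h := norm_sub_norm_le y v; rw [hy] at h; linarith
  have hxne : x - v ≠ 0 := fun h => by rw [h] at hxv; simp at hxv
  have hx₀ne : x₀ - v ≠ 0 := fun h => by rw [h] at hx₀v; simp at hx₀v
  set W : E := sa ^ 2 • ((‖y - v‖ ^ 2)⁻¹ • (y - v) - (1 - ‖v‖ ^ 2)⁻¹ • v) + (1 - ‖v‖ ^ 2)⁻¹ • v
    with hW
  set u : E := (‖x - v‖ ^ 2)⁻¹ • (x - v) - W with hu
  set u₀ : E := (‖x₀ - v‖ ^ 2)⁻¹ • (x₀ - v) - W with hu₀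
  have hlow : α * sa / (‖x - v‖ * ‖y - v‖) ≤ ‖u‖ :=
    aux_key' v x y hv hx hy α sa hα hsa hsx
  have hlowpos : 0 < α * sa / (‖x - v‖ * ‖y - v‖) := by positivity
  have hne : u ≠ 0 := by
    intro h
    rw [h, norm_zero] at hlow
    linarith
  have hdiff : u - u₀ = (‖x - v‖ ^ 2)⁻¹ • (x - v) - (‖x₀ - v‖ ^ 2)⁻¹ • (x₀ - v) := by
    rw [hu, hu₀]; abel
  have hnd : ‖u - u₀‖ = ‖x - x₀‖ / (‖x - v‖ * ‖x₀ - v‖) := by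
    rw [hdiff, aux_inv_dist _ _ hxne hx₀ne, sub_sub_sub_cancel_right]
  calc ‖‖u‖⁻¹ • u - ‖u₀‖⁻¹ • u₀‖ ≤ 2 * ‖u - u₀‖ / ‖u‖ := aux_normalize u u₀ hne
    _ ≤ (2 * (‖x - x₀‖ / (‖x - v‖ * ‖x₀ - v‖))) / (α * sa / (‖x - v‖ * ‖y - v‖)) := by
        apply div_le_div₀ (by positivity) (by rw [hnd]) hlowpos hlow
    _ = 2 * ‖y - v‖ / (α * sa * ‖x₀ - v‖) * ‖x - x₀‖ := by
        field_simp

lemma aux_diff2 (v x y y₀ : E) (hv : ‖v‖ < 1) (hx : ‖x‖ = 1) (hy : ‖y‖ = 1) (hy₀ : ‖y₀‖ = 1)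
    (α sa : ℝ) (hα : 0 < α) (hsa : 0 < sa) (hsy : α ≤ ‖x - y‖) :
    ‖‖(‖x - v‖ ^ 2)⁻¹ • (x - v) -
          (sa ^ 2 • ((‖y - v‖ ^ 2)⁻¹ • (y - v) - (1 - ‖v‖ ^ 2)⁻¹ • v) + (1 - ‖v‖ ^ 2)⁻¹ • v)‖⁻¹ •
        ((‖x - v‖ ^ 2)⁻¹ • (x - v) -
          (sa ^ 2 • ((‖y - v‖ ^ 2)⁻¹ • (y - v) - (1 - ‖v‖ ^ 2)⁻¹ • v) + (1 - ‖v‖ ^ 2)⁻¹ • v)) -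
      ‖(‖x - v‖ ^ 2)⁻¹ • (x - v) -
          (sa ^ 2 • ((‖y₀ - v‖ ^ 2)⁻¹ • (y₀ - v) - (1 - ‖v‖ ^ 2)⁻¹ • v) + (1 - ‖v‖ ^ 2)⁻¹ • v)‖⁻¹ •
        ((‖x - v‖ ^ 2)⁻¹ • (x - v) -
          (sa ^ 2 • ((‖y₀ - v‖ ^ 2)⁻¹ • (y₀ - v) - (1 - ‖v‖ ^ 2)⁻¹ • v) + (1 - ‖v‖ ^ 2)⁻¹ • v))‖
    ≤ 2 * sa * ‖x - v‖ / (α * ‖y₀ - v‖) * ‖y - y₀‖ := by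
  have hb : 0 < 1 - ‖v‖ ^ 2 := by nlinarith [norm_nonneg v]
  have hxv : 0 < ‖x - v‖ := by have h := norm_sub_norm_le x v; rw [hx] at h; linarith
  have hyv : 0 < ‖y - v‖ := by have h := norm_sub_norm_le y v; rw [hy] at h; linarith
  have hy₀v : 0 < ‖y₀ - v‖ := by have h := norm_sub_norm_le y₀ v; rw [hy₀] at h; linarith
  have hyne : y - v ≠ 0 := fun h => by rw [h] at hyv; simp at hyv
  have hy₀ne : y₀ - v ≠ 0 := fun h => by rw [h] at hy₀v; simp at hy₀v
  set u : E := (‖x - v‖ ^ 2)⁻¹ • (x - v) -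
      (sa ^ 2 • ((‖y - v‖ ^ 2)⁻¹ • (y - v) - (1 - ‖v‖ ^ 2)⁻¹ • v) + (1 - ‖v‖ ^ 2)⁻¹ • v) with hu
  set u₀ : E := (‖x - v‖ ^ 2)⁻¹ • (x - v) -
      (sa ^ 2 • ((‖y₀ - v‖ ^ 2)⁻¹ • (y₀ - v) - (1 - ‖v‖ ^ 2)⁻¹ • v) + (1 - ‖v‖ ^ 2)⁻¹ • v)
    with hu₀
  have hlow : α * sa / (‖x - v‖ * ‖y - v‖) ≤ ‖u‖ :=
    aux_key' v x y hv hx hy α sa hα hsa hsy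
  have hlowpos : 0 < α * sa / (‖x - v‖ * ‖y - v‖) := by positivity
  have hne : u ≠ 0 := by
    intro h
    rw [h, norm_zero] at hlow
    linarith
  have hdiff : u - u₀ = sa ^ 2 • ((‖y₀ - v‖ ^ 2)⁻¹ • (y₀ - v) - (‖y - v‖ ^ 2)⁻¹ • (y - v)) := by
    rw [hu, hu₀]
    module
  have hnd : ‖u - u₀‖ = sa ^ 2 * (‖y - y₀‖ / (‖y - v‖ * ‖y₀ - v‖)) := by
    rw [hdiff, norm_smul, Real.norm_eq_abs, abs_of_pos (by positivity : (0:ℝ) < sa ^ 2),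
      aux_inv_dist _ _ hy₀ne hyne, sub_sub_sub_cancel_right, norm_sub_rev]
    rw [mul_comm ‖y₀ - v‖ ‖y - v‖]
  calc ‖‖u‖⁻¹ • u - ‖u₀‖⁻¹ • u₀‖ ≤ 2 * ‖u - u₀‖ / ‖u‖ := aux_normalize u u₀ hne
    _ ≤ (2 * (sa ^ 2 * (‖y - y₀‖ / (‖y - v‖ * ‖y₀ - v‖)))) / (α * sa / (‖x - v‖ * ‖y - v‖)) := by
        apply div_le_div₀ (by positivity) (by rw [hnd]) hlowpos hlow
    _ = 2 * sa * ‖x - v‖ / (α * ‖y₀ - v‖) * ‖y - y₀‖ := by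
        field_simp

/-- Uniform Jacobian bound: there is `C > 0` such that for all `v ∈ B⁴`, `z ∈ (0,1)` and
almost all `(s,t)`, the Jacobian of the canonical family Gauss map `g_{(v,z)}` is at most `C`. -/
theorem canonical_family_uniform_jacobian_bound
    (γ₁ γ₂ : ℝ → EuclideanSpace ℝ (Fin 4)) (K₁ K₂ : NNReal)
    (h₁ : LipschitzWith K₁ γ₁) (h₂ : LipschitzWith K₂ γ₂)
    (hS₁ : ∀ s, ‖γ₁ s‖ = 1) (hS₂ : ∀ t, ‖γ₂ t‖ = 1)
    (α : ℝ) (hα : 0 < α) (hsep : ∀ s t, α ≤ ‖γ₁ s - γ₂ t‖)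
    (g : EuclideanSpace ℝ (Fin 4) → ℝ → ℝ × ℝ → EuclideanSpace ℝ (Fin 4))
    (hg : ∀ v z p, g v z p =
      ‖(‖γ₁ p.1 - v‖ ^ 2)⁻¹ • (γ₁ p.1 - v)
          - ((1 + (1 - ‖v‖ ^ 2) * (2 * z - 1) / ((1 - ‖v‖ ^ 2 + z) * (1 - z))) •
              ((‖γ₂ p.2 - v‖ ^ 2)⁻¹ • (γ₂ p.2 - v) - (1 - ‖v‖ ^ 2)⁻¹ • v)
            + (1 - ‖v‖ ^ 2)⁻¹ • v)‖⁻¹ •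
        ((‖γ₁ p.1 - v‖ ^ 2)⁻¹ • (γ₁ p.1 - v)
          - ((1 + (1 - ‖v‖ ^ 2) * (2 * z - 1) / ((1 - ‖v‖ ^ 2 + z) * (1 - z))) •
              ((‖γ₂ p.2 - v‖ ^ 2)⁻¹ • (γ₂ p.2 - v) - (1 - ‖v‖ ^ 2)⁻¹ • v)
            + (1 - ‖v‖ ^ 2)⁻¹ • v))) :
    ∃ C : ℝ, 0 < C ∧ ∀ v : EuclideanSpace ℝ (Fin 4), ‖v‖ < 1 →
      ∀ z ∈ Set.Ioo (0:ℝ) 1, ∀ᵐ p : ℝ × ℝ,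
        Real.sqrt (‖deriv (fun s => g v z (s, p.2)) p.1‖ ^ 2
              * ‖deriv (fun t => g v z (p.1, t)) p.2‖ ^ 2
            - ⟪deriv (fun s => g v z (s, p.2)) p.1, deriv (fun t => g v z (p.1, t)) p.2⟫ ^ 2)
          ≤ C := by
  refine ⟨4 * ((K₁ : ℝ) + 1) * ((K₂ : ℝ) + 1) / α ^ 2, by positivity, ?_⟩
  intro v hv z hz
  obtain ⟨hz0, hz1⟩ := hz
  refine Filter.Eventually.of_forall ?_
  rintro ⟨s, t⟩
  simp only
  have hb : 0 < 1 - ‖v‖ ^ 2 := by nlinarith [norm_nonneg v]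
  have hden : 0 < (1 - ‖v‖ ^ 2 + z) * (1 - z) := by nlinarith
  set a : ℝ := 1 + (1 - ‖v‖ ^ 2) * (2 * z - 1) / ((1 - ‖v‖ ^ 2 + z) * (1 - z)) with ha_def
  have ha : 0 < a := by
    rw [ha_def, show 1 + (1 - ‖v‖ ^ 2) * (2 * z - 1) / ((1 - ‖v‖ ^ 2 + z) * (1 - z))
        = z * ((1 - ‖v‖ ^ 2) + 1 - z) / ((1 - ‖v‖ ^ 2 + z) * (1 - z)) from by
      field_simp; ring]
    apply div_pos (by nlinarith) hden
  set sa : ℝ := Real.sqrt a with hsa_def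
  have hsa : 0 < sa := Real.sqrt_pos.mpr ha
  have hsa2 : sa ^ 2 = a := Real.sq_sqrt ha.le
  have hxv : ∀ s', 0 < ‖γ₁ s' - v‖ := fun s' => by
    have h := norm_sub_norm_le (γ₁ s') v; rw [hS₁] at h; linarith
  have hyv : ∀ t', 0 < ‖γ₂ t' - v‖ := fun t' => by
    have h := norm_sub_norm_le (γ₂ t') v; rw [hS₂] at h; linarith
  set M₁ : ℝ := 2 * (K₁ : ℝ) * ‖γ₂ t - v‖ / (α * sa * ‖γ₁ s - v‖) with hM₁
  set M₂ : ℝ := 2 * sa * (K₂ : ℝ) * ‖γ₁ s - v‖ / (α * ‖γ₂ t - v‖) with hM₂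
  have hA : ‖deriv (fun s' => g v z (s', t)) s‖ ≤ M₁ := by
    apply aux_deriv_bound _ _ _ (by rw [hM₁]; positivity)
    intro s'
    simp only [hg]
    rw [← ha_def, ← hsa2]
    calc _ ≤ 2 * ‖γ₂ t - v‖ / (α * sa * ‖γ₁ s - v‖) * ‖γ₁ s' - γ₁ s‖ :=
          aux_diff1 v (γ₁ s') (γ₁ s) (γ₂ t) hv (hS₁ s') (hS₁ s) (hS₂ t) α sa hα hsa (hsep s' t)
      _ ≤ 2 * ‖γ₂ t - v‖ / (α * sa * ‖γ₁ s - v‖) * ((K₁ : ℝ) * |s' - s|) := by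
          have h := h₁.dist_le_mul s' s
          rw [dist_eq_norm, dist_eq_norm, Real.norm_eq_abs] at h
          gcongr
      _ = M₁ * |s' - s| := by rw [hM₁]; ring
  have hB : ‖deriv (fun t' => g v z (s, t')) t‖ ≤ M₂ := by
    apply aux_deriv_bound _ _ _ (by rw [hM₂]; positivity)
    intro t'
    simp only [hg]
    rw [← ha_def, ← hsa2]
    calc _ ≤ 2 * sa * ‖γ₁ s - v‖ / (α * ‖γ₂ t - v‖) * ‖γ₂ t' - γ₂ t‖ :=
          aux_diff2 v (γ₁ s) (γ₂ t') (γ₂ t) hv (hS₁ s) (hS₂ t') (hS₂ t) α sa hα hsa (hsep s t')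
      _ ≤ 2 * sa * ‖γ₁ s - v‖ / (α * ‖γ₂ t - v‖) * ((K₂ : ℝ) * |t' - t|) := by
          have h := h₂.dist_le_mul t' t
          rw [dist_eq_norm, dist_eq_norm, Real.norm_eq_abs] at h
          gcongr
      _ = M₂ * |t' - t| := by rw [hM₂]; ring
  set D₁ := deriv (fun s' => g v z (s', t)) s
  set D₂ := deriv (fun t' => g v z (s, t')) t
  have hprod : M₁ * M₂ = 4 * (K₁ : ℝ) * (K₂ : ℝ) / α ^ 2 := by
    have h1 : α ≠ 0 := hα.ne'
    have h2 : sa ≠ 0 := hsa.ne'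
    have h3 : ‖γ₁ s - v‖ ≠ 0 := (hxv s).ne'
    have h4 : ‖γ₂ t - v‖ ≠ 0 := (hyv t).ne'
    rw [hM₁, hM₂]
    field_simp
    ring
  calc Real.sqrt (‖D₁‖ ^ 2 * ‖D₂‖ ^ 2 - ⟪D₁, D₂⟫ ^ 2)
      ≤ Real.sqrt ((‖D₁‖ * ‖D₂‖) ^ 2) := by
        apply Real.sqrt_le_sqrt
        nlinarith [sq_nonneg (⟪D₁, D₂⟫ : ℝ)]
    _ = ‖D₁‖ * ‖D₂‖ := Real.sqrt_sq (by positivity)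
    _ ≤ M₁ * M₂ := by
        apply mul_le_mul hA hB (norm_nonneg _) (le_trans (norm_nonneg _) hA)
    _ = 4 * (K₁ : ℝ) * (K₂ : ℝ) / α ^ 2 := hprod
    _ ≤ 4 * ((K₁ : ℝ) + 1) * ((K₂ : ℝ) + 1) / α ^ 2 := by
        gcongr ?_ / α ^ 2
        nlinarith [K₁.coe_nonneg, K₂.coe_nonneg]
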